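/- For K ∈ (0, 1/ln 2), the unique positive solution p of K·p = log₂(1+p) is given by p = -(1/(K ln 2))·W₋₁(-K ln 2 · 2^(-K)) - 1, where W₋₁ is the lower real branch of the Lambert W function. -/

import Mathlib

lemma xexp_strictAntiOn : StrictAntiOn (fun x : ℝ => x * Real.exp x) (Set.Iic (-1 : ℝ)) := by
  apply strictAntiOn_of_deriv_neg (convex_Iic _)
  · exact (continuous_id.mul Real.continuous_exp).continuousOn
  · intro x hx
    rw [interior_Iic] at hx
    have hd : HasDerivAt (fun x : ℝ => x * Real.exp x) (1 * Real.exp x + x * Real.exp x) x :=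
      (hasDerivAt_id x).mul (Real.hasDerivAt_exp x)
    rw [hd.deriv]
    have hE := Real.exp_pos x
    have : x < -1 := hx
    nlinarith

lemma log_gt_aux (c p : ℝ) (hc : 0 < c) (hp : 0 < p) (h : c * (1 + p) ≤ 1) :
    c * p < Real.log (1 + p) := by
  have hmono : StrictMonoOn (fun t : ℝ => Real.log (1 + t) - c * t) (Set.Icc 0 p) := by
    apply strictMonoOn_of_deriv_pos (convex_Icc _ _)
    · apply ContinuousOn.sub
      · apply Real.continuousOn_log.comp (continuous_const.add continuous_id).continuousOn
        intro t ht
        simp only [Set.mem_Icc] at ht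
        simp only [Set.mem_compl_iff, Set.mem_singleton_iff]
        intro habs
        simp at habs
        linarith [ht.1]
      · exact (continuous_const.mul continuous_id).continuousOn
    · intro x hx
      rw [interior_Icc] at hx
      obtain ⟨hx0, hxp⟩ := hx
      have h1x : (0:ℝ) < 1 + x := by linarith
      have hd1 : HasDerivAt (fun t : ℝ => 1 + t) 1 x := (hasDerivAt_id x).const_add 1
      have hd2 : HasDerivAt (fun t : ℝ => Real.log (1 + t)) ((1 + x)⁻¹ * 1) x :=
        (Real.hasDerivAt_log (ne_of_gt h1x)).comp x hd1
      have hd3 : HasDerivAt (fun t : ℝ => c * t) c x := by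
        simpa using (hasDerivAt_id x).const_mul c
      have hd : HasDerivAt (fun t : ℝ => Real.log (1 + t) - c * t) ((1 + x)⁻¹ * 1 - c) x :=
        hd2.sub hd3
      rw [hd.deriv]
      have : c * (1 + x) < 1 := by nlinarith
      have : c < (1 + x)⁻¹ := by
        rw [← one_div, lt_div_iff₀ h1x]
        linarith
      linarith
  have h0 : (0:ℝ) ∈ Set.Icc (0:ℝ) p := by constructor <;> linarith
  have hpm : p ∈ Set.Icc (0:ℝ) p := by constructor <;> linarith
  have := hmono h0 hpm hp
  simp at this
  linarith

theorem RPE_lambertW (K : ℝ) (hK0 : 0 < K) (hK1 : K < 1 / Real.log 2)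
    (w : ℝ) (hw_branch : w ≤ -1)
    (hw : w * Real.exp w = -(K * Real.log 2) * (2 : ℝ) ^ (-K)) :
    (0 < -(1 / (K * Real.log 2)) * w - 1 ∧
      K * (-(1 / (K * Real.log 2)) * w - 1) =
        Real.logb 2 (1 + (-(1 / (K * Real.log 2)) * w - 1))) ∧
    ∀ p : ℝ, 0 < p → K * p = Real.logb 2 (1 + p) →
      p = -(1 / (K * Real.log 2)) * w - 1 := by
  have hlog2 : (0:ℝ) < Real.log 2 := Real.log_pos (by norm_num)
  set c : ℝ := K * Real.log 2 with hc_def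
  have hc0 : 0 < c := mul_pos hK0 hlog2
  have hc1 : c < 1 := by
    rw [lt_div_iff₀ hlog2] at hK1; exact hK1
  have hcne : c ≠ 0 := ne_of_gt hc0
  -- rewrite hw
  have hw' : w * Real.exp w = -c * Real.exp (-c) := by
    rw [hw, Real.rpow_def_of_pos (by norm_num : (0:ℝ) < 2)]
    ring_nf
    rw [hc_def]; ring_nf
  -- the candidate p
  set q : ℝ := -(1 / c) * w - 1 with hq_def
  have h1q : 1 + q = -w / c := by rw [hq_def]; ring
  have hq0 : 0 < q := by
    have h1 : c < -w := by linarith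
    have : 1 < -w / c := (one_lt_div hc0).mpr h1
    rw [hq_def]
    have : -(1/c) * w = -w / c := by ring
    linarith [((one_lt_div hc0).mpr h1)]
  have hwq : w = -c * (1 + q) := by
    rw [h1q]; field_simp
  have h1q0 : (0:ℝ) < 1 + q := by linarith
  -- key log equation for q
  have hlnq : Real.log (1 + q) = c * q := by
    have h1 : -c * (1 + q) * Real.exp (-c * (1 + q)) = -c * Real.exp (-c) := by
      rw [← hwq]; exact hw'
    have h2 : (1 + q) * Real.exp (-c * (1 + q)) = Real.exp (-c) := by
      have h1' : -c * ((1 + q) * Real.exp (-c * (1 + q))) = -c * Real.exp (-c) := by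
        rw [← h1]; ring
      exact mul_left_cancel₀ (neg_ne_zero.mpr hcne) h1'
    have h3 : Real.exp (Real.log (1 + q) + -c * (1 + q)) = Real.exp (-c) := by
      rw [Real.exp_add, Real.exp_log h1q0]; exact h2
    have h4 := Real.exp_injective h3
    linarith
  refine ⟨⟨hq0, ?_⟩, ?_⟩
  · rw [Real.logb, hlnq, hc_def]
    field_simp
  · intro p hp hpe
    have hlnp : Real.log (1 + p) = c * p := by
      rw [Real.logb] at hpe
      field_simp at hpe
      rw [hc_def]; linarith
    -- show c * (1 + p) > 1
    have hgt : 1 < c * (1 + p) := by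
      by_contra h
      push_neg at h
      have := log_gt_aux c p hc0 hp h
      rw [hlnp] at this
      linarith
    set w' : ℝ := -c * (1 + p) with hw'_def
    have hw'le : w' ∈ Set.Iic (-1 : ℝ) := by
      simp only [Set.mem_Iic, hw'_def]; linarith
    have hwle : w ∈ Set.Iic (-1 : ℝ) := hw_branch
    have heq : w' * Real.exp w' = w * Real.exp w := by
      rw [hw'_def, hw']
      have h1p0 : (0:ℝ) < 1 + p := by linarith
      have : (1 + p) = Real.exp (Real.log (1 + p)) := (Real.exp_log h1p0).symm
      calc -c * (1 + p) * Real.exp (-c * (1 + p))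
          = -c * (Real.exp (Real.log (1 + p)) * Real.exp (-c * (1 + p))) := by
            rw [← this]; ring
        _ = -c * Real.exp (Real.log (1 + p) + -c * (1 + p)) := by rw [Real.exp_add]
        _ = -c * Real.exp (-c) := by rw [hlnp]; ring_nf
    have hww : w' = w := xexp_strictAntiOn.injOn hw'le hwle heq
    have : -c * (1 + p) = -c * (1 + q) := by rw [← hw'_def, hww, hwq]
    have := mul_left_cancel₀ (neg_ne_zero.mpr hcne) this
    linarith
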